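/- Let H be a real Hilbert space and let f : H → ℝ be Fréchet differentiable and L-smooth of order ℓ > 1 (for some L > 0). Let x ∈ H, let v ∈ H with v ≠ 0, and let φ ≤ 0 be such that ⟨∇f(x), v⟩ ≤ φ. Then inf_{γ ≥ 0} f(x + γv) ≤ f(x) − (−φ)^{ℓ̄} / (ℓ̄ · L^{ℓ̄−1} · ‖v‖^{ℓ̄}), where ℓ̄ := ℓ/(ℓ−1). -/

import Mathlib

open RealInnerProductSpace

/-- If `f` is `L`-smooth of order `ℓ > 1`, `v ≠ 0`, `φ ≤ 0`, and `⟪∇f x, v⟫ ≤ φ`, then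
`inf_{γ ≥ 0} f (x + γ v) ≤ f x - (-φ)^ℓ̄ / (ℓ̄ L^(ℓ̄-1) ‖v‖^ℓ̄)` where `ℓ̄ = ℓ/(ℓ-1)`. -/
theorem stmt_8
    {H : Type*} [NormedAddCommGroup H] [InnerProductSpace ℝ H] [CompleteSpace H]
    (f : H → ℝ) (f' : H → H) (hdiff : ∀ x, HasGradientAt f (f' x) x)
    (L ℓ : ℝ) (hL : 0 < L) (hℓ : 1 < ℓ)
    (hsmooth : ∀ x y : H, f y - f x - ⟪f' x, y - x⟫ ≤ L / ℓ * ‖y - x‖ ^ ℓ)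
    (x v : H) (hv : v ≠ 0) (φ : ℝ) (hφ : φ ≤ 0) (hvφ : ⟪f' x, v⟫ ≤ φ)
    (ℓb : ℝ) (hℓb : ℓb = ℓ / (ℓ - 1)) :
    ∃ γ : ℝ, 0 ≤ γ ∧
      f (x + γ • v) ≤ f x - (-φ) ^ ℓb / (ℓb * L ^ (ℓb - 1) * ‖v‖ ^ ℓb) := by
  have hℓ1 : 0 < ℓ - 1 := by linarith
  have hℓb_pos : 0 < ℓb := by rw [hℓb]; positivity
  rcases hφ.lt_or_eq with hφlt | hφeq
  · -- φ < 0
    set a : ℝ := -φ with ha_def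
    have ha : 0 < a := by simp [ha_def]; linarith
    set nv : ℝ := ‖v‖ with hnv_def
    have hnv : 0 < nv := norm_pos_iff.mpr hv
    set s : ℝ := 1 / (ℓ - 1) with hs_def
    have hs : 0 < s := by positivity
    have hnvℓ : (0:ℝ) < nv ^ ℓ := Real.rpow_pos_of_pos hnv ℓ
    set B : ℝ := a / (L * nv ^ ℓ) with hB_def
    have hB : 0 < B := by positivity
    set γ : ℝ := B ^ s with hγ_def
    have hγ : 0 < γ := Real.rpow_pos_of_pos hB s
    refine ⟨γ, hγ.le, ?_⟩
    have hsmooth' := hsmooth x (x + γ • v)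
    rw [add_sub_cancel_left] at hsmooth'
    have hinner : ⟪f' x, γ • v⟫ ≤ γ * φ := by
      rw [real_inner_smul_right]
      exact mul_le_mul_of_nonneg_left hvφ hγ.le
    have hnorm : ‖γ • v‖ ^ ℓ = γ ^ ℓ * nv ^ ℓ := by
      rw [norm_smul, Real.norm_eq_abs, abs_of_pos hγ,
        Real.mul_rpow hγ.le (norm_nonneg v)]
    have hsℓ : s * ℓ = s + 1 := by rw [hs_def]; field_simp; ring
    have h1s : (1:ℝ) + s = ℓb := by rw [hs_def, hℓb]; field_simp; ring
    have hℓs : ℓ * s = ℓb := by rw [hs_def, hℓb]; field_simp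
    have hℓb1 : ℓb - 1 = s := by rw [hs_def, hℓb]; field_simp; ring
    have hγℓ : γ ^ ℓ = γ * B := by
      rw [hγ_def, ← Real.rpow_mul hB.le, hsℓ, Real.rpow_add hB, Real.rpow_one]
    have hBval : B * (L * nv ^ ℓ) = a := div_mul_cancel₀ _ (by positivity)
    have hγval : γ = a ^ s / (L ^ s * nv ^ ℓb) := by
      rw [hγ_def, hB_def, Real.div_rpow ha.le (by positivity),
        Real.mul_rpow hL.le hnvℓ.le, ← Real.rpow_mul hnv.le, hℓs]
    have haℓb : a ^ ℓb = a * a ^ s := by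
      rw [← h1s, Real.rpow_add ha, Real.rpow_one]
    have hval : γ * a / ℓb = a ^ ℓb / (ℓb * L ^ (ℓb - 1) * nv ^ ℓb) := by
      rw [hγval, haℓb, hℓb1]
      have hLs : (0:ℝ) < L ^ s := Real.rpow_pos_of_pos hL s
      have hnvℓb : (0:ℝ) < nv ^ ℓb := Real.rpow_pos_of_pos hnv ℓb
      field_simp
    rw [hnorm, hγℓ] at hsmooth'
    have hstep : f (x + γ • v) ≤ f x + γ * φ + L / ℓ * (γ * B * nv ^ ℓ) := by
      nlinarith [hsmooth', hinner]
    have hLB : L / ℓ * (γ * B * nv ^ ℓ) = γ * a / ℓ := by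
      rw [← hBval]; field_simp
    have hmerge : γ * φ + γ * a / ℓ = -(γ * a / ℓb) := by
      have : φ = -a := by simp [ha_def]
      rw [this, hℓb]
      field_simp
      ring
    have hgoal : f (x + γ • v) ≤ f x - γ * a / ℓb := by
      rw [hLB] at hstep; linarith
    rw [hval] at hgoal
    simpa [ha_def, hnv_def] using hgoal
  · -- φ = 0
    refine ⟨0, le_refl 0, ?_⟩
    subst hφeq
    simp [Real.zero_rpow hℓb_pos.ne']
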